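/- Let X₁, X₂ ∈ ℝ^{d×n} and D a positive semidefinite d×d matrix. Write C_X = (1/n) X Xᵀ. If the smallest eigenvalue of C_{X_i} + D is at least ε > 0 for i = 1,2, then ‖(C_{X₁} + D)^{−1} − (C_{X₂} + D)^{−1}‖_F ≤ (2 / √(n ε³)) · ‖X₁ − X₂‖_F. -/

import Mathlib

open Matrix
/-- Frobenius norm of a real matrix. -/
noncomputable def frobNorm {d n : ℕ} (A : Matrix (Fin d) (Fin n) ℝ) : ℝ :=
  Real.sqrt (∑ i, ∑ j, (A i j) ^ 2)

section Aux

attribute [local instance] Matrix.frobeniusNormedAddCommGroup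

lemma frobNorm_eq_norm {d n : ℕ} (A : Matrix (Fin d) (Fin n) ℝ) : frobNorm A = ‖A‖ := by
  rw [Matrix.frobenius_norm_def, frobNorm, Real.sqrt_eq_rpow]
  congr 1
  refine Finset.sum_congr rfl fun i _ => Finset.sum_congr rfl fun j _ => ?_
  rw [show (2:ℝ) = ((2:ℕ):ℝ) by norm_cast, Real.rpow_natCast, Real.norm_eq_abs, sq_abs]

lemma frobNorm_nonneg {d n : ℕ} (A : Matrix (Fin d) (Fin n) ℝ) : 0 ≤ frobNorm A :=
  Real.sqrt_nonneg _

lemma frobNorm_add_le {d n : ℕ} (A B : Matrix (Fin d) (Fin n) ℝ) :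
    frobNorm (A + B) ≤ frobNorm A + frobNorm B := by
  simp only [frobNorm_eq_norm]; exact norm_add_le A B

lemma frobNorm_smul {d n : ℕ} (r : ℝ) (A : Matrix (Fin d) (Fin n) ℝ) :
    frobNorm (r • A) = |r| * frobNorm A := by
  rw [frobNorm, frobNorm]
  have h : ∑ i, ∑ j, ((r • A) i j) ^ 2 = r ^ 2 * ∑ i, ∑ j, (A i j) ^ 2 := by
    simp_rw [Matrix.smul_apply, smul_eq_mul, mul_pow, ← Finset.mul_sum]
  rw [h, Real.sqrt_mul (sq_nonneg r), Real.sqrt_sq_eq_abs]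

lemma frobNorm_transpose {d n : ℕ} (A : Matrix (Fin d) (Fin n) ℝ) :
    frobNorm Aᵀ = frobNorm A := by
  simp only [frobNorm_eq_norm]; exact Matrix.frobenius_norm_transpose A

lemma frobNorm_sub_rev {d n : ℕ} (A B : Matrix (Fin d) (Fin n) ℝ) :
    frobNorm (A - B) = frobNorm (B - A) := by
  simp only [frobNorm_eq_norm]; exact norm_sub_rev A B

end Aux

/-- If `M` contracts vectors by factor `c` (in the squared sense), then
left multiplication by `M` contracts the Frobenius norm by `c`. -/
lemma frobNorm_mul_left {p d k : ℕ} (M : Matrix (Fin p) (Fin d) ℝ)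
    (A : Matrix (Fin d) (Fin k) ℝ) {c : ℝ} (hc : 0 ≤ c)
    (h : ∀ v : Fin d → ℝ, (M *ᵥ v) ⬝ᵥ (M *ᵥ v) ≤ c ^ 2 * (v ⬝ᵥ v)) :
    frobNorm (M * A) ≤ c * frobNorm A := by
  have key : ∑ i, ∑ j, ((M * A) i j) ^ 2 ≤ c ^ 2 * ∑ i, ∑ j, (A i j) ^ 2 := by
    calc ∑ i, ∑ j, ((M * A) i j) ^ 2 = ∑ j, ∑ i, ((M * A) i j) ^ 2 := Finset.sum_comm
      _ ≤ ∑ j : Fin k, c ^ 2 * ∑ i, (A i j) ^ 2 := by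
          refine Finset.sum_le_sum fun j _ => ?_
          have := h (fun x => A x j)
          simpa [Matrix.mul_apply, Matrix.mulVec, dotProduct, sq] using this
      _ = c ^ 2 * ∑ j, ∑ i, (A i j) ^ 2 := by rw [Finset.mul_sum]
      _ = c ^ 2 * ∑ i, ∑ j, (A i j) ^ 2 := by rw [Finset.sum_comm]
  have h1 : frobNorm (M * A) ≤ Real.sqrt (c ^ 2 * ∑ i, ∑ j, (A i j) ^ 2) :=
    Real.sqrt_le_sqrt key
  calc frobNorm (M * A) ≤ Real.sqrt (c ^ 2 * ∑ i, ∑ j, (A i j) ^ 2) := h1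
    _ = c * frobNorm A := by
        rw [Real.sqrt_mul (sq_nonneg c), Real.sqrt_sq hc, frobNorm]

lemma frobNorm_mul_right {p d k : ℕ} (N : Matrix (Fin d) (Fin p) ℝ)
    (A : Matrix (Fin k) (Fin d) ℝ) {c : ℝ} (hc : 0 ≤ c)
    (h : ∀ v : Fin d → ℝ, (Nᵀ *ᵥ v) ⬝ᵥ (Nᵀ *ᵥ v) ≤ c ^ 2 * (v ⬝ᵥ v)) :
    frobNorm (A * N) ≤ c * frobNorm A := by
  have := frobNorm_mul_left Nᵀ Aᵀ hc h
  rwa [← Matrix.transpose_mul, frobNorm_transpose, frobNorm_transpose] at this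

/-- Positive-definiteness and quantitative lower bound from `A - ε•1 ⪰ 0`. -/
lemma posdef_of_shift {d : ℕ} {A : Matrix (Fin d) (Fin d) ℝ} {ε : ℝ} (hε : 0 < ε)
    (h : (A - ε • (1 : Matrix (Fin d) (Fin d) ℝ)).PosSemidef) :
    A.PosDef ∧ ∀ x : Fin d → ℝ, ε * (x ⬝ᵥ x) ≤ x ⬝ᵥ (A *ᵥ x) := by
  have hlow : ∀ x : Fin d → ℝ, ε * (x ⬝ᵥ x) ≤ x ⬝ᵥ (A *ᵥ x) := by
    intro x
    have := h.dotProduct_mulVec_nonneg x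
    simp only [star_trivial, Matrix.sub_mulVec, Matrix.smul_mulVec,
      Matrix.one_mulVec, dotProduct_sub, dotProduct_smul, smul_eq_mul] at this
    linarith
  have herm : A.IsHermitian := by
    have h1 : (A - ε • (1 : Matrix (Fin d) (Fin d) ℝ)).IsHermitian := h.1
    have h2 : (ε • (1 : Matrix (Fin d) (Fin d) ℝ)).IsHermitian := by
      unfold Matrix.IsHermitian
      rw [Matrix.conjTranspose_smul, Matrix.conjTranspose_one, star_trivial]
    have := h1.add h2
    simpa using this
  refine ⟨.of_dotProduct_mulVec_pos herm fun x hx => ?_, hlow⟩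
  have hxx : 0 < x ⬝ᵥ x := by
    rcases lt_or_eq_of_le (Finset.sum_nonneg fun i _ => mul_self_nonneg (x i)) with hlt | heq
    · exact hlt
    · exact absurd (dotProduct_self_eq_zero.mp heq.symm) hx
  have := hlow x
  simp only [star_trivial]
  calc (0:ℝ) < ε * (x ⬝ᵥ x) := mul_pos hε hxx
    _ ≤ x ⬝ᵥ (A *ᵥ x) := this

/-- Quantitative bound `‖A⁻¹ v‖² ≤ ε⁻² ‖v‖²`. -/
lemma inv_mulVec_bound {d : ℕ} {A : Matrix (Fin d) (Fin d) ℝ} {ε : ℝ} (hε : 0 < ε)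
    (hlow : ∀ x : Fin d → ℝ, ε * (x ⬝ᵥ x) ≤ x ⬝ᵥ (A *ᵥ x))
    (hinv : A * A⁻¹ = 1) (v : Fin d → ℝ) :
    (A⁻¹ *ᵥ v) ⬝ᵥ (A⁻¹ *ᵥ v) ≤ (ε⁻¹) ^ 2 * (v ⬝ᵥ v) := by
  set w := A⁻¹ *ᵥ v with hw
  have hAw : A *ᵥ w = v := by
    rw [hw, Matrix.mulVec_mulVec, hinv, Matrix.one_mulVec]
  have h1 : ε * (w ⬝ᵥ w) ≤ w ⬝ᵥ v := by rw [← hAw]; exact hlow w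
  have hcs : (w ⬝ᵥ v) ^ 2 ≤ (w ⬝ᵥ w) * (v ⬝ᵥ v) := by
    have := Finset.sum_mul_sq_le_sq_mul_sq Finset.univ w v
    simpa [dotProduct, pow_two] using this
  have hww : 0 ≤ w ⬝ᵥ w := Finset.sum_nonneg fun i _ => mul_self_nonneg (w i)
  have hvv : 0 ≤ v ⬝ᵥ v := Finset.sum_nonneg fun i _ => mul_self_nonneg (v i)
  rcases eq_or_lt_of_le hww with h0 | h0
  · rw [← h0]
    positivity
  · have hwv : 0 ≤ w ⬝ᵥ v := le_trans (by positivity) h1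
    have h2 : (ε * (w ⬝ᵥ w)) ^ 2 ≤ (w ⬝ᵥ w) * (v ⬝ᵥ v) := by
      calc (ε * (w ⬝ᵥ w)) ^ 2 ≤ (w ⬝ᵥ v) ^ 2 := by
            apply sq_le_sq' <;> nlinarith
        _ ≤ (w ⬝ᵥ w) * (v ⬝ᵥ v) := hcs
    have h3 : ε ^ 2 * (w ⬝ᵥ w) ≤ v ⬝ᵥ v := by nlinarith [h2, h0]
    rw [show (ε⁻¹) ^ 2 * (v ⬝ᵥ v) = (v ⬝ᵥ v) / ε ^ 2 by field_simp]
    rw [le_div_iff₀ (by positivity)]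
    nlinarith

/-- Quantitative bound `‖A⁻¹ X v‖² ≤ (n/ε) ‖v‖²` when `n⁻¹ X Xᵀ ⪯ A`. -/
lemma inv_mul_X_bound {d n : ℕ} {A : Matrix (Fin d) (Fin d) ℝ}
    {X : Matrix (Fin d) (Fin n) ℝ} {ε : ℝ} (hε : 0 < ε)
    (hlow : ∀ x : Fin d → ℝ, ε * (x ⬝ᵥ x) ≤ x ⬝ᵥ (A *ᵥ x))
    (hup : ∀ x : Fin d → ℝ, (Xᵀ *ᵥ x) ⬝ᵥ (Xᵀ *ᵥ x) ≤ (n : ℝ) * (x ⬝ᵥ (A *ᵥ x)))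
    (hinv : A * A⁻¹ = 1) (v : Fin n → ℝ) :
    ((A⁻¹ * X) *ᵥ v) ⬝ᵥ ((A⁻¹ * X) *ᵥ v) ≤ (Real.sqrt ((n : ℝ) / ε)) ^ 2 * (v ⬝ᵥ v) := by
  rw [Real.sq_sqrt (by positivity)]
  set w := (A⁻¹ * X) *ᵥ v with hw
  have hAw : A *ᵥ w = X *ᵥ v := by
    rw [hw, ← Matrix.mulVec_mulVec, Matrix.mulVec_mulVec, hinv, Matrix.one_mulVec]
  have h1 : ε * (w ⬝ᵥ w) ≤ w ⬝ᵥ (A *ᵥ w) := hlow w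
  have hww : 0 ≤ w ⬝ᵥ w := Finset.sum_nonneg fun i _ => mul_self_nonneg (w i)
  have hvv : 0 ≤ v ⬝ᵥ v := Finset.sum_nonneg fun i _ => mul_self_nonneg (v i)
  have ht0 : 0 ≤ w ⬝ᵥ (A *ᵥ w) := le_trans (by positivity) h1
  have heq : w ⬝ᵥ (A *ᵥ w) = (Xᵀ *ᵥ w) ⬝ᵥ v := by
    rw [hAw, Matrix.dotProduct_mulVec, ← Matrix.mulVec_transpose]
  have hcs : (w ⬝ᵥ (A *ᵥ w)) ^ 2 ≤ ((Xᵀ *ᵥ w) ⬝ᵥ (Xᵀ *ᵥ w)) * (v ⬝ᵥ v) := by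
    rw [heq]
    have := Finset.sum_mul_sq_le_sq_mul_sq Finset.univ (Xᵀ *ᵥ w) v
    simpa [dotProduct, pow_two] using this
  have h2 : (w ⬝ᵥ (A *ᵥ w)) ^ 2 ≤ ((n : ℝ) * (w ⬝ᵥ (A *ᵥ w))) * (v ⬝ᵥ v) :=
    le_trans hcs (mul_le_mul_of_nonneg_right (hup w) hvv)
  have h3 : w ⬝ᵥ (A *ᵥ w) ≤ (n : ℝ) * (v ⬝ᵥ v) := by
    rcases eq_or_lt_of_le ht0 with h0 | h0
    · rw [← h0]; positivity
    · nlinarith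
  rw [div_mul_eq_mul_div, le_div_iff₀ hε]
  nlinarith
theorem resolvent_lipschitz {d n : ℕ} (X₁ X₂ : Matrix (Fin d) (Fin n) ℝ)
    (D : Matrix (Fin d) (Fin d) ℝ) (hD : D.PosSemidef) (ε : ℝ) (hε : 0 < ε)
    (h₁ : (((n : ℝ)⁻¹ • (X₁ * X₁ᵀ) + D) - ε • (1 : Matrix (Fin d) (Fin d) ℝ)).PosSemidef)
    (h₂ : (((n : ℝ)⁻¹ • (X₂ * X₂ᵀ) + D) - ε • (1 : Matrix (Fin d) (Fin d) ℝ)).PosSemidef) :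
    frobNorm (((n : ℝ)⁻¹ • (X₁ * X₁ᵀ) + D)⁻¹ - ((n : ℝ)⁻¹ • (X₂ * X₂ᵀ) + D)⁻¹)
      ≤ (2 / Real.sqrt (n * ε ^ 3)) * frobNorm (X₁ - X₂) := by
  rcases Nat.eq_zero_or_pos n with hn | hn
  · subst hn
    simp [frobNorm]
  have hn' : (0:ℝ) < n := by exact_mod_cast hn
  set A₁ := (n : ℝ)⁻¹ • (X₁ * X₁ᵀ) + D with hA₁
  set A₂ := (n : ℝ)⁻¹ • (X₂ * X₂ᵀ) + D with hA₂
  obtain ⟨hP₁, hlow₁⟩ := posdef_of_shift hε h₁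
  obtain ⟨hP₂, hlow₂⟩ := posdef_of_shift hε h₂
  have hdet₁ : IsUnit A₁.det := (Matrix.isUnit_iff_isUnit_det _).mp hP₁.isUnit
  have hdet₂ : IsUnit A₂.det := (Matrix.isUnit_iff_isUnit_det _).mp hP₂.isUnit
  have hinv₁ : A₁ * A₁⁻¹ = 1 := Matrix.mul_nonsing_inv _ hdet₁
  have hinv₂ : A₂ * A₂⁻¹ = 1 := Matrix.mul_nonsing_inv _ hdet₂
  have hinv₁' : A₁⁻¹ * A₁ = 1 := Matrix.nonsing_inv_mul _ hdet₁
  -- upper bounds n⁻¹ X Xᵀ ⪯ A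
  have hup : ∀ (X : Matrix (Fin d) (Fin n) ℝ) (A : Matrix (Fin d) (Fin d) ℝ),
      A = (n : ℝ)⁻¹ • (X * Xᵀ) + D →
      ∀ x : Fin d → ℝ, (Xᵀ *ᵥ x) ⬝ᵥ (Xᵀ *ᵥ x) ≤ (n : ℝ) * (x ⬝ᵥ (A *ᵥ x)) := by
    intro X A hA x
    have hXX : x ⬝ᵥ ((X * Xᵀ) *ᵥ x) = (Xᵀ *ᵥ x) ⬝ᵥ (Xᵀ *ᵥ x) := by
      rw [← Matrix.mulVec_mulVec, Matrix.dotProduct_mulVec, ← Matrix.mulVec_transpose]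
    have hDx : 0 ≤ x ⬝ᵥ (D *ᵥ x) := by simpa [star_trivial] using hD.dotProduct_mulVec_nonneg x
    rw [hA]
    simp only [Matrix.add_mulVec, Matrix.smul_mulVec, dotProduct_add,
      dotProduct_smul, smul_eq_mul]
    rw [hXX]
    have hns : (n : ℝ) * ((n:ℝ)⁻¹ * ((Xᵀ *ᵥ x) ⬝ᵥ (Xᵀ *ᵥ x))) = (Xᵀ *ᵥ x) ⬝ᵥ (Xᵀ *ᵥ x) := by
      field_simp
    nlinarith [hns, mul_nonneg hn'.le hDx]
  have hup₁ := hup X₁ A₁ hA₁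
  have hup₂ := hup X₂ A₂ hA₂
  -- the key decomposition
  set E := X₂ - X₁ with hE
  have hdiff : A₂ - A₁ = (n : ℝ)⁻¹ • (X₁ * Eᵀ + E * X₂ᵀ) := by
    rw [hA₁, hA₂, hE]
    simp only [Matrix.transpose_sub, Matrix.mul_sub, Matrix.sub_mul, smul_add, smul_sub]
    abel
  have hid : A₁⁻¹ - A₂⁻¹ = A₁⁻¹ * (A₂ - A₁) * A₂⁻¹ := by
    rw [Matrix.mul_sub, Matrix.sub_mul, Matrix.mul_assoc, hinv₂, mul_one]
    rw [hinv₁']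
    rw [one_mul]
  set T₁ := (A₁⁻¹ * X₁) * ((n : ℝ)⁻¹ • (Eᵀ * A₂⁻¹)) with hT₁
  set T₂ := ((n : ℝ)⁻¹ • (A₁⁻¹ * E)) * (X₂ᵀ * A₂⁻¹) with hT₂
  have hsplit : A₁⁻¹ - A₂⁻¹ = T₁ + T₂ := by
    rw [hid, hdiff, hT₁, hT₂]
    simp only [Matrix.mul_smul, Matrix.smul_mul, Matrix.mul_add, Matrix.add_mul,
      smul_add, Matrix.mul_assoc]
  -- symmetry of inverses
  have hsym₂ : (A₂⁻¹)ᵀ = A₂⁻¹ := by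
    rw [Matrix.transpose_nonsing_inv]
    congr 1
    have : A₂ᵀ = A₂ := by
      have := hP₂.isHermitian
      rwa [Matrix.IsHermitian, Matrix.conjTranspose_eq_transpose_of_trivial] at this
    rw [this]
  -- bound T₁
  set c : ℝ := Real.sqrt ((n : ℝ) / ε) with hc
  have hc0 : 0 ≤ c := Real.sqrt_nonneg _
  have hb₁ : frobNorm T₁ ≤ c * ((n:ℝ)⁻¹ * (ε⁻¹ * frobNorm E)) := by
    rw [hT₁]
    have step1 : frobNorm ((A₁⁻¹ * X₁) * ((n : ℝ)⁻¹ • (Eᵀ * A₂⁻¹)))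
        ≤ c * frobNorm ((n : ℝ)⁻¹ • (Eᵀ * A₂⁻¹)) :=
      frobNorm_mul_left _ _ hc0 (inv_mul_X_bound hε hlow₁ hup₁ hinv₁)
    have step2 : frobNorm ((n : ℝ)⁻¹ • (Eᵀ * A₂⁻¹)) = (n:ℝ)⁻¹ * frobNorm (Eᵀ * A₂⁻¹) := by
      rw [frobNorm_smul, abs_of_nonneg (by positivity)]
    have step3 : frobNorm (Eᵀ * A₂⁻¹) ≤ ε⁻¹ * frobNorm Eᵀ := by
      refine frobNorm_mul_right _ _ (by positivity) ?_
      intro v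
      rw [hsym₂]
      exact inv_mulVec_bound hε hlow₂ hinv₂ v
    calc frobNorm ((A₁⁻¹ * X₁) * ((n : ℝ)⁻¹ • (Eᵀ * A₂⁻¹)))
        ≤ c * frobNorm ((n : ℝ)⁻¹ • (Eᵀ * A₂⁻¹)) := step1
      _ = c * ((n:ℝ)⁻¹ * frobNorm (Eᵀ * A₂⁻¹)) := by rw [step2]
      _ ≤ c * ((n:ℝ)⁻¹ * (ε⁻¹ * frobNorm Eᵀ)) := by
          apply mul_le_mul_of_nonneg_left _ hc0
          apply mul_le_mul_of_nonneg_left step3 (by positivity)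
      _ = c * ((n:ℝ)⁻¹ * (ε⁻¹ * frobNorm E)) := by rw [frobNorm_transpose]
  -- bound T₂
  have hb₂ : frobNorm T₂ ≤ c * ((n:ℝ)⁻¹ * (ε⁻¹ * frobNorm E)) := by
    rw [hT₂]
    have step1 : frobNorm (((n : ℝ)⁻¹ • (A₁⁻¹ * E)) * (X₂ᵀ * A₂⁻¹))
        ≤ c * frobNorm ((n : ℝ)⁻¹ • (A₁⁻¹ * E)) := by
      refine frobNorm_mul_right _ _ hc0 ?_
      intro v
      have : (X₂ᵀ * A₂⁻¹)ᵀ = A₂⁻¹ * X₂ := by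
        rw [Matrix.transpose_mul, hsym₂, Matrix.transpose_transpose]
      rw [this]
      exact inv_mul_X_bound hε hlow₂ hup₂ hinv₂ v
    have step2 : frobNorm ((n : ℝ)⁻¹ • (A₁⁻¹ * E)) = (n:ℝ)⁻¹ * frobNorm (A₁⁻¹ * E) := by
      rw [frobNorm_smul, abs_of_nonneg (by positivity)]
    have step3 : frobNorm (A₁⁻¹ * E) ≤ ε⁻¹ * frobNorm E :=
      frobNorm_mul_left _ _ (by positivity) (inv_mulVec_bound hε hlow₁ hinv₁)
    calc frobNorm (((n : ℝ)⁻¹ • (A₁⁻¹ * E)) * (X₂ᵀ * A₂⁻¹))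
        ≤ c * frobNorm ((n : ℝ)⁻¹ • (A₁⁻¹ * E)) := step1
      _ = c * ((n:ℝ)⁻¹ * frobNorm (A₁⁻¹ * E)) := by rw [step2]
      _ ≤ c * ((n:ℝ)⁻¹ * (ε⁻¹ * frobNorm E)) := by
          apply mul_le_mul_of_nonneg_left _ hc0
          exact mul_le_mul_of_nonneg_left step3 (by positivity)
  -- combine
  have htotal : frobNorm (A₁⁻¹ - A₂⁻¹) ≤ 2 * (c * ((n:ℝ)⁻¹ * (ε⁻¹ * frobNorm E))) := by
    rw [hsplit]
    calc frobNorm (T₁ + T₂) ≤ frobNorm T₁ + frobNorm T₂ := frobNorm_add_le _ _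
      _ ≤ 2 * (c * ((n:ℝ)⁻¹ * (ε⁻¹ * frobNorm E))) := by linarith
  -- arithmetic
  have hs : (0:ℝ) < Real.sqrt ((n:ℝ) * ε ^ 3) := Real.sqrt_pos.mpr (by positivity)
  have hmul : c * Real.sqrt ((n:ℝ) * ε ^ 3) = (n:ℝ) * ε := by
    rw [hc, ← Real.sqrt_mul (by positivity)]
    rw [show (n:ℝ) / ε * ((n:ℝ) * ε ^ 3) = ((n:ℝ) * ε) ^ 2 by field_simp]
    exact Real.sqrt_sq (by positivity)
  have harith : c * ((n:ℝ)⁻¹ * ε⁻¹) = 1 / Real.sqrt ((n:ℝ) * ε ^ 3) := by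
    rw [eq_div_iff hs.ne',
      show c * ((n:ℝ)⁻¹ * ε⁻¹) * Real.sqrt ((n:ℝ) * ε ^ 3)
        = (c * Real.sqrt ((n:ℝ) * ε ^ 3)) * ((n:ℝ)⁻¹ * ε⁻¹) by ring, hmul]
    field_simp
  have hEnorm : frobNorm E = frobNorm (X₁ - X₂) := by
    rw [hE, frobNorm_sub_rev]
  calc frobNorm (A₁⁻¹ - A₂⁻¹) ≤ 2 * (c * ((n:ℝ)⁻¹ * (ε⁻¹ * frobNorm E))) := htotal
    _ = 2 * (c * ((n:ℝ)⁻¹ * ε⁻¹)) * frobNorm E := by ring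
    _ = 2 * (1 / Real.sqrt ((n:ℝ) * ε ^ 3)) * frobNorm E := by rw [harith]
    _ = (2 / Real.sqrt ((n:ℝ) * ε ^ 3)) * frobNorm (X₁ - X₂) := by
        rw [hEnorm]; ring
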